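/- (0-deterministic variant of the Kochen–Specker theorem) For every natural number d with d ≥ 3, there is no 0-deterministic QIVPM on ℂ^d; that is, there is no QIVPM (L, R) on the projectors of ℂ^d such that every projector P satisfies (L P, R P) = (0, 0) or (L P, R P) = (1, 1). -/

import Mathlib

open Matrix
open scoped ComplexOrder

/-- A projector on `ℂ^d`: an idempotent, self-adjoint matrix. -/
def IsProjector {d : ℕ} (P : Matrix (Fin d) (Fin d) ℂ) : Prop :=
  P * P = P ∧ Pᴴ = P

/-- A quantum interval-valued probability measure (QIVPM) on `ℂ^d`,
given by the pair of interval-endpoint functions `L ≤ R`. -/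
def IsQIVPM {d : ℕ} (L R : Matrix (Fin d) (Fin d) ℂ → ℝ) : Prop :=
  (∀ P, IsProjector P → 0 ≤ L P ∧ L P ≤ R P ∧ R P ≤ 1) ∧
  (L 0 = 0 ∧ R 0 = 0) ∧
  (L 1 = 1 ∧ R 1 = 1) ∧
  (∀ P, IsProjector P → L (1 - P) = 1 - R P ∧ R (1 - P) = 1 - L P) ∧
  (∀ P₀ P₁, IsProjector P₀ → IsProjector P₁ → P₀ * P₁ = P₁ * P₀ →
    L P₀ + L P₁ ≤ L (P₀ + P₁ - P₀ * P₁) + L (P₀ * P₁) ∧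
    R (P₀ + P₁ - P₀ * P₁) + R (P₀ * P₁) ≤ R P₀ + R P₁)

/-- A QIVPM is `δ`-deterministic if every projector's interval lies in `[0,δ]` or `[1-δ,1]`. -/
def IsDeltaDet {d : ℕ} (δ : ℝ) (L R : Matrix (Fin d) (Fin d) ℂ → ℝ) : Prop :=
  ∀ P, IsProjector P → R P ≤ δ ∨ 1 - δ ≤ L P

/-- A QIVPM is `0`-deterministic if every projector is assigned `[0,0]` or `[1,1]`. -/
def IsZeroDet {d : ℕ} (L R : Matrix (Fin d) (Fin d) ℂ → ℝ) : Prop :=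
  ∀ P, IsProjector P → (L P = 0 ∧ R P = 0) ∨ (L P = 1 ∧ R P = 1)

/-- A state (density matrix) on `ℂ^d`. -/
def IsState {d : ℕ} (ρ : Matrix (Fin d) (Fin d) ℂ) : Prop :=
  ρ.PosSemidef ∧ ρ.trace = 1

namespace KSAux

abbrev V3 := ℝ × ℝ × ℝ

def dot3 (a b : V3) : ℝ := a.1 * b.1 + a.2.1 * b.2.1 + a.2.2 * b.2.2

def cross3 (a b : V3) : V3 :=
  (a.2.1 * b.2.2 - a.2.2 * b.2.1, a.2.2 * b.1 - a.1 * b.2.2, a.1 * b.2.1 - a.2.1 * b.1)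

lemma dot3_self_eq_zero {a : V3} (h : dot3 a a = 0) : a = 0 := by
  obtain ⟨x, y, z⟩ := a
  simp only [dot3] at h
  have hx : x = 0 := by nlinarith [sq_nonneg x, sq_nonneg y, sq_nonneg z]
  have hy : y = 0 := by nlinarith [sq_nonneg x, sq_nonneg y, sq_nonneg z]
  have hz : z = 0 := by nlinarith [sq_nonneg x, sq_nonneg y, sq_nonneg z]
  simp [Prod.ext_iff, hx, hy, hz]

lemma ne_zero_of_dot3_left {a b : V3} (h : dot3 a b ≠ 0) : a ≠ 0 := by
  rintro rfl; exact h (by obtain ⟨x,y,z⟩ := b; simp [dot3])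

lemma ne_zero_of_dot3_right {a b : V3} (h : dot3 a b ≠ 0) : b ≠ 0 := by
  rintro rfl; exact h (by obtain ⟨x,y,z⟩ := a; simp [dot3])

lemma mk_ne_zero {x y z : ℝ} (h : x*x + y*y + z*z ≠ 0) : ((x,y,z) : V3) ≠ 0 :=
  ne_zero_of_dot3_left (a := (x,y,z)) (b := (x,y,z)) (by simpa [dot3] using h)

section Coloring

variable (g : V3 → ℝ)
variable (h01 : ∀ a : V3, a ≠ 0 → g a = 0 ∨ g a = 1)
variable (hsum : ∀ a b c : V3, a ≠ 0 → b ≠ 0 → c ≠ 0 →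
    dot3 a b = 0 → dot3 a c = 0 → dot3 b c = 0 → g a + g b + g c = 1)

include h01 hsum in
/-- If `g a = 1` then every nonzero vector orthogonal to `a` gets value `0`. -/
lemma ruleZ {a b : V3} (ha : a ≠ 0) (hb : b ≠ 0) (hab : dot3 a b = 0)
    (hga : g a = 1) : g b = 0 := by
  set c := cross3 a b with hc
  have lagrange : dot3 a a * dot3 b b = (dot3 a b)^2 + dot3 c c := by
    obtain ⟨x,y,z⟩ := a; obtain ⟨u,v,w⟩ := b
    simp only [dot3, cross3, hc]; ring
  have hcne : c ≠ 0 := by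
    intro h0
    have hz : dot3 a a * dot3 b b = 0 := by
      rw [lagrange, h0, hab]; simp [dot3]
    rcases mul_eq_zero.1 hz with h | h
    · exact ha (dot3_self_eq_zero h)
    · exact hb (dot3_self_eq_zero h)
  have hac : dot3 a c = 0 := by
    obtain ⟨x,y,z⟩ := a; obtain ⟨u,v,w⟩ := b
    simp only [dot3, cross3, hc]; ring
  have hbc : dot3 b c = 0 := by
    obtain ⟨x,y,z⟩ := a; obtain ⟨u,v,w⟩ := b
    simp only [dot3, cross3, hc]; ring
  have hs := hsum a b c ha hb hcne hab hac hbc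
  rcases h01 b hb with h | h
  · exact h
  · rcases h01 c hcne with h' | h' <;> rw [hga, h, h'] at hs <;> linarith

include hsum in
/-- Scale invariance for vectors of the form `(p, 0, q)`. -/
lemma scaleInv {p q k : ℝ} (hpq : p^2 + q^2 ≠ 0) (hk : k ≠ 0) :
    g (k*p, 0, k*q) = g (p, 0, q) := by
  have hpq' : 0 < p^2 + q^2 := lt_of_le_of_ne (by positivity) (Ne.symm hpq)
  have hk2 : 0 < k^2 := by positivity
  have hv : (p, (0:ℝ), q) ≠ (0 : V3) := mk_ne_zero (by nlinarith)
  have hkv : ((k*p, 0, k*q) : V3) ≠ 0 := mk_ne_zero (by nlinarith)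
  have hb : ((0,1,0) : V3) ≠ 0 := mk_ne_zero (by norm_num)
  have hcv : ((-q, 0, p) : V3) ≠ 0 := mk_ne_zero (by nlinarith)
  have e1 := hsum (p,0,q) (0,1,0) (-q,0,p) hv hb hcv (by simp [dot3]) (by simp [dot3]; ring) (by simp [dot3])
  have e2 := hsum (k*p,0,k*q) (0,1,0) (-q,0,p) hkv hb hcv (by simp [dot3]) (by simp [dot3]; ring) (by simp [dot3])
  linarith

lemma dot3_add_left (a b c : V3) : dot3 (a+b) c = dot3 a c + dot3 b c := by
  obtain ⟨x,y,z⟩ := a; obtain ⟨u,v,w⟩ := b; obtain ⟨p,q,s⟩ := c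
  simp [dot3, Prod.mk_add_mk]; ring
lemma dot3_sub_left (a b c : V3) : dot3 (a-b) c = dot3 a c - dot3 b c := by
  obtain ⟨x,y,z⟩ := a; obtain ⟨u,v,w⟩ := b; obtain ⟨p,q,s⟩ := c
  simp [dot3, Prod.mk_sub_mk]; ring
lemma dot3_smul_left (k : ℝ) (a b : V3) : dot3 (k • a) b = k * dot3 a b := by
  obtain ⟨x,y,z⟩ := a; obtain ⟨p,q,s⟩ := b
  simp [dot3, Prod.smul_mk, smul_eq_mul]; ring
lemma dot3_comm (a b : V3) : dot3 a b = dot3 b a := by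
  obtain ⟨x,y,z⟩ := a; obtain ⟨p,q,s⟩ := b; simp [dot3]; ring
lemma dot3_add_right (a b c : V3) : dot3 a (b+c) = dot3 a b + dot3 a c := by
  rw [dot3_comm, dot3_add_left, dot3_comm b a, dot3_comm c a]
lemma dot3_sub_right (a b c : V3) : dot3 a (b-c) = dot3 a b - dot3 a c := by
  rw [dot3_comm, dot3_sub_left, dot3_comm b a, dot3_comm c a]
lemma dot3_smul_right (k : ℝ) (a b : V3) : dot3 a (k • b) = k * dot3 a b := by
  rw [dot3_comm, dot3_smul_left, dot3_comm b a]

include h01 hsum in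
lemma gadget {X W Z : V3} {r t : ℝ} (hr : r ≠ 0)
    (hXX : dot3 X X = r) (hWW : dot3 W W = r) (hZZ : dot3 Z Z = r)
    (hXW : dot3 X W = 0) (hXZ : dot3 X Z = 0) (hWZ : dot3 W Z = 0)
    (ht0 : t ≠ 0) (ht : t^2 ≤ 1/16)
    (hgX : g X = 1) (hgY : g (X + t • Z) = 0) : False := by
  have hWX : dot3 W X = 0 := by rw [dot3_comm]; exact hXW
  have hZX : dot3 Z X = 0 := by rw [dot3_comm]; exact hXZ
  have hZW : dot3 Z W = 0 := by rw [dot3_comm]; exact hWZ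
  have htr : t * r ≠ 0 := mul_ne_zero ht0 hr
  set y : V3 := X + t • Z with hy
  set n0 : V3 := Z - t • X with hn0def
  -- basic nonvanishing
  have hX0 : X ≠ 0 := ne_zero_of_dot3_left (a := X) (b := X) (by rw [hXX]; exact hr)
  have hW0 : W ≠ 0 := ne_zero_of_dot3_left (a := W) (b := W) (by rw [hWW]; exact hr)
  have hy0 : y ≠ 0 := ne_zero_of_dot3_left (a := y) (b := X)
    (by simp only [hy, dot3_add_left, dot3_smul_left, hXX, hZX]; simpa using hr)
  have hn00 : n0 ≠ 0 := ne_zero_of_dot3_left (a := n0) (b := Z)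
    (by simp only [hn0def, dot3_sub_left, dot3_smul_left, hZZ, hXZ]; simpa using hr)
  have hgW : g W = 0 := ruleZ g h01 hsum hX0 hW0 hXW hgX
  have hgn0 : g n0 = 1 := by
    have h1 : dot3 y W = 0 := by
      simp only [hy, dot3_add_left, dot3_smul_left, hXW, hZW]; ring
    have h2 : dot3 y n0 = 0 := by
      simp only [hy, hn0def, dot3_add_left, dot3_add_right, dot3_sub_right,
        dot3_smul_left, dot3_smul_right, hXZ, hXX, hZZ, hZX]; ring
    have h3 : dot3 W n0 = 0 := by
      simp only [hn0def, dot3_sub_right, dot3_smul_right, hWZ, hWX]; ring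
    have := hsum y W n0 hy0 hW0 hn00 h1 h2 h3
    linarith
  -- the family of forced-1 vectors
  have key : ∀ b : ℝ, g (b • W + t • Z - (b^2 + t^2) • X) = 1 := by
    intro b
    set Yb : V3 := X + b • W + t • Z with hYb
    set Ab : V3 := t • W - b • Z with hAb
    set Nb : V3 := b • W + t • Z - (b^2 + t^2) • X with hNb
    have hYb0 : Yb ≠ 0 := ne_zero_of_dot3_left (a := Yb) (b := X)
      (by simp only [hYb, dot3_add_left, dot3_smul_left, hXX, hWX, hZX]; simpa using hr)
    have hAb0 : Ab ≠ 0 := ne_zero_of_dot3_left (a := Ab) (b := W)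
      (by simp only [hAb, dot3_sub_left, dot3_smul_left, hWW, hZW]; simpa using htr)
    have hNb0 : Nb ≠ 0 := ne_zero_of_dot3_left (a := Nb) (b := Z)
      (by simp only [hNb, dot3_sub_left, dot3_add_left, dot3_smul_left, hWZ, hZZ, hXZ]
          simpa using htr)
    have hgYb : g Yb = 0 := by
      refine ruleZ g h01 hsum hn00 hYb0 ?_ hgn0
      simp only [hYb, hn0def, dot3_sub_left, dot3_add_right, dot3_smul_left,
        dot3_smul_right, hZX, hZW, hZZ, hXX, hXW, hXZ]; ring
    have hgAb : g Ab = 0 := by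
      refine ruleZ g h01 hsum hX0 hAb0 ?_ hgX
      simp only [hAb, dot3_sub_right, dot3_smul_right, hXW, hXZ]; ring
    have d1 : dot3 Yb Ab = 0 := by
      simp only [hYb, hAb, dot3_add_left, dot3_sub_right, dot3_smul_left,
        dot3_smul_right, hXW, hXZ, hWW, hWZ, hZW, hZZ]; ring
    have d2 : dot3 Yb Nb = 0 := by
      simp only [hYb, hNb, dot3_add_left, dot3_sub_right, dot3_add_right,
        dot3_smul_left, dot3_smul_right, hXW, hXZ, hXX, hWW, hWZ, hWX, hZW, hZZ, hZX]; ring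
    have d3 : dot3 Ab Nb = 0 := by
      simp only [hAb, hNb, dot3_sub_left, dot3_sub_right, dot3_add_right,
        dot3_smul_left, dot3_smul_right, hWW, hWZ, hWX, hZW, hZZ, hZX]; ring
    have := hsum Yb Ab Nb hYb0 hAb0 hNb0 d1 d2 d3
    linarith
  -- quadratic root
  have ht2 : (0:ℝ) ≤ t^2 := sq_nonneg t
  have hD : (0:ℝ) ≤ 1 - 4*t^2*(1+t^2)*(2+t^2) := by
    nlinarith [sq_nonneg t, sq_nonneg (t^2), mul_nonneg ht2 ht2]
  obtain ⟨b', hquad⟩ : ∃ b' : ℝ, (1+t^2)*b'^2 + b' + t^2*(2+t^2) = 0 := by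
    refine ⟨(Real.sqrt (1 - 4*t^2*(1+t^2)*(2+t^2)) - 1)/(2*(1+t^2)), ?_⟩
    have hs : (Real.sqrt (1 - 4*t^2*(1+t^2)*(2+t^2)))^2 = 1 - 4*t^2*(1+t^2)*(2+t^2) :=
      Real.sq_sqrt hD
    have h1t : (0:ℝ) < 1 + t^2 := by positivity
    field_simp
    ring_nf; ring_nf at hs; nlinarith [hs]
  have hdot : dot3 ((1:ℝ) • W + t • Z - ((1:ℝ)^2 + t^2) • X)
      (b' • W + t • Z - (b'^2 + t^2) • X) = 0 := by
    simp only [dot3_sub_left, dot3_sub_right, dot3_add_left, dot3_add_right,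
      dot3_smul_left, dot3_smul_right, hXX, hWW, hZZ, hXW, hXZ, hWZ, hWX, hZX, hZW]
    linear_combination r * hquad
  have hN10 : ((1:ℝ) • W + t • Z - ((1:ℝ)^2 + t^2) • X) ≠ 0 :=
    ne_zero_of_dot3_left (a := _) (b := Z)
      (by simp only [dot3_sub_left, dot3_add_left, dot3_smul_left, hWZ, hZZ, hXZ]
          simpa using htr)
  have hNb0 : (b' • W + t • Z - (b'^2 + t^2) • X) ≠ 0 :=
    ne_zero_of_dot3_left (a := _) (b := Z)
      (by simp only [dot3_sub_left, dot3_add_left, dot3_smul_left, hWZ, hZZ, hXZ]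
          simpa using htr)
  have hz := ruleZ g h01 hsum hN10 hNb0 hdot (key 1)
  rw [key b'] at hz
  norm_num at hz


include h01 hsum in
lemma stepLink {p q : ℝ} (hpq : p^2 + q^2 ≠ 0) (hg : g (p,0,q) = 1) :
    g (99*p - 20*q, 0, 99*q + 20*p) = 1 := by
  have hr0 : (0:ℝ) ≤ p^2 + q^2 := by positivity
  have hP'pq : (99*p - 20*q)^2 + (99*q + 20*p)^2 ≠ 0 := by
    intro h; exact hpq (by nlinarith)
  have hP'ne : ((99*p - 20*q, 0, 99*q + 20*p) : V3) ≠ 0 := by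
    apply mk_ne_zero; intro h; exact hP'pq (by nlinarith)
  rcases h01 _ hP'ne with h0 | h1
  · exfalso
    refine gadget g h01 hsum (X := (p,0,q)) (W := (0, Real.sqrt (p^2+q^2), 0))
      (Z := (-q,0,p)) (r := p^2+q^2) (t := 20/99) hpq ?_ ?_ ?_ ?_ ?_ ?_
      (by norm_num) (by norm_num) hg ?_
    · simp [dot3]; ring
    · simp only [dot3]
      simpa using Real.mul_self_sqrt hr0
    · simp [dot3]; ring
    · simp [dot3]
    · simp [dot3]; ring
    · simp [dot3]
    · have he : ((p,0,q) : V3) + (20/99 : ℝ) • ((-q,0,p) : V3)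
          = ((1/99)*(99*p - 20*q), 0, (1/99)*(99*q + 20*p)) := by
        simp [Prod.ext_iff, Prod.smul_mk, smul_eq_mul]; constructor <;> ring
      rw [he, scaleInv g hsum hP'pq (by norm_num)]
      exact h0
  · exact h1

include h01 hsum in
lemma no_coloring (hone : g (1,0,0) = 1) : False := by
  have s1 := stepLink g h01 hsum (p := 1) (q := 0) (by norm_num) hone
  norm_num at s1
  have s2 := stepLink g h01 hsum (p := 99) (q := 20) (by norm_num) s1
  norm_num at s2
  have s3 := stepLink g h01 hsum (p := 9401) (q := 3960) (by norm_num) s2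
  norm_num at s3
  have s4 := stepLink g h01 hsum (p := 851499) (q := 580060) (by norm_num) s3
  norm_num at s4
  have s5 := stepLink g h01 hsum (p := 72697201) (q := 74455920) (by norm_num) s4
  norm_num at s5
  have s6 := stepLink g h01 hsum (p := 5707904499) (q := 8825080100) (by norm_num) s5
  norm_num at s6
  have s7 := stepLink g h01 hsum (p := 388580943401) (q := 987841019880) (by norm_num) s6
  norm_num at s7
  -- s7 : g (18712692999099, 0, 105567879836140) = 1
  have hge3 : g (0,0,1) = 0 := by
    refine ruleZ g h01 hsum (a := (1,0,0)) (mk_ne_zero (by norm_num))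
      (mk_ne_zero (by norm_num)) (by simp [dot3]) hone
  set a7 : ℝ := 18712692999099 with ha7
  set b7 : ℝ := 105567879836140 with hb7
  have hb7ne : b7 ≠ 0 := by norm_num [hb7]
  have hrne : a7^2 + b7^2 ≠ 0 := by positivity
  have hr0 : (0:ℝ) ≤ a7^2 + b7^2 := by positivity
  refine gadget g h01 hsum (X := (a7,0,b7)) (W := (0, Real.sqrt (a7^2+b7^2), 0))
    (Z := (-b7,0,a7)) (r := a7^2+b7^2) (t := a7/b7) hrne ?_ ?_ ?_ ?_ ?_ ?_ ?_ ?_ ?_ ?_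
  · simp [dot3]; ring
  · simp only [dot3]
    simpa using Real.mul_self_sqrt hr0
  · simp [dot3]; ring
  · simp [dot3]
  · simp [dot3]; ring
  · simp [dot3]
  · norm_num [ha7, hb7]
  · rw [div_pow, div_le_div_iff₀ (by positivity) (by norm_num)]
    norm_num [ha7, hb7]
  · exact s7
  · have he : ((a7,0,b7) : V3) + (a7/b7 : ℝ) • ((-b7,0,a7) : V3)
        = (((a7^2+b7^2)/b7)*0, 0, ((a7^2+b7^2)/b7)*1) := by
      simp [Prod.ext_iff, Prod.smul_mk, smul_eq_mul]
      field_simp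
      constructor <;> ring
    rw [he, scaleInv g hsum (p := 0) (q := 1) (by norm_num) (by positivity)]
    exact hge3


end Coloring

section Mat

variable {d : ℕ} (L R : Matrix (Fin d) (Fin d) ℂ → ℝ)

lemma L_eq_R (hZ : IsZeroDet L R) {P : Matrix (Fin d) (Fin d) ℂ}
    (hP : IsProjector P) : L P = R P := by
  rcases hZ P hP with ⟨h1, h2⟩ | ⟨h1, h2⟩ <;> rw [h1, h2]

lemma addL (hQ : IsQIVPM L R) (hZ : IsZeroDet L R)
    {P Q : Matrix (Fin d) (Fin d) ℂ} (hP : IsProjector P) (hQ' : IsProjector Q)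
    (hPQ : P * Q = 0) : IsProjector (P + Q) ∧ L (P + Q) = L P + L Q := by
  obtain ⟨hbound, ⟨hL0, hR0⟩, ⟨hL1, hR1⟩, hcompl, hconv⟩ := hQ
  have hQP : Q * P = 0 := by
    have := congrArg conjTranspose hPQ
    rwa [conjTranspose_mul, hP.2, hQ'.2, conjTranspose_zero] at this
  have hproj : IsProjector (P + Q) := by
    constructor
    · rw [add_mul, mul_add, mul_add, hP.1, hQ'.1, hPQ, hQP]
      abel
    · rw [conjTranspose_add, hP.2, hQ'.2]
  refine ⟨hproj, ?_⟩
  have hconv' := hconv P Q hP hQ' (by rw [hPQ, hQP])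
  rw [hPQ, sub_zero, hL0, hR0, add_zero, add_zero] at hconv'
  have h1 : L (P + Q) = R (P + Q) := L_eq_R L R hZ hproj
  have h2 : L P = R P := L_eq_R L R hZ hP
  have h3 : L Q = R Q := L_eq_R L R hZ hQ'
  linarith [hconv'.1, hconv'.2]

def stdProj (i : Fin d) : Matrix (Fin d) (Fin d) ℂ := Matrix.single i i 1

lemma stdProj_isProjector (i : Fin d) : IsProjector (stdProj i) := by
  constructor
  · rw [stdProj, Matrix.single_mul_single_same, mul_one]
  · ext a b
    by_cases h1 : i = a <;> by_cases h2 : i = b <;>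
      simp [stdProj, conjTranspose_apply, Matrix.single, Matrix.of_apply, h1, h2]

lemma sum_stdProj (hQ : IsQIVPM L R) (hZ : IsZeroDet L R) (s : Finset (Fin d)) :
    IsProjector (∑ i ∈ s, stdProj i) ∧
      L (∑ i ∈ s, stdProj i) = ∑ i ∈ s, L (stdProj i) := by
  classical
  induction s using Finset.induction_on with
  | empty =>
    refine ⟨⟨by simp, by simp⟩, ?_⟩
    simpa using hQ.2.1.1
  | @insert a s ha ih =>
    rw [Finset.sum_insert ha, Finset.sum_insert ha]
    have horth : stdProj a * (∑ i ∈ s, stdProj i) = 0 := by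
      rw [Finset.mul_sum]
      refine Finset.sum_eq_zero fun i hi => ?_
      exact Matrix.single_mul_single_of_ne (1:ℂ) a a i (by rintro rfl; exact ha hi) (1:ℂ)
    have := addL L R hQ hZ (stdProj_isProjector a) ih.1 horth
    exact ⟨this.1, by rw [this.2, ih.2]⟩

lemma sum_stdProj_univ : (∑ i : Fin d, stdProj i) = (1 : Matrix (Fin d) (Fin d) ℂ) := by
  ext a b
  rw [Matrix.sum_apply]
  by_cases h : a = b
  · subst h
    rw [Matrix.one_apply_eq]
    rw [Finset.sum_eq_single a (fun i _ hia => by simp [stdProj, Matrix.single, Matrix.of_apply, hia]) (by simp)]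
    simp [stdProj]
  · rw [Matrix.one_apply_ne h]
    refine Finset.sum_eq_zero fun i _ => ?_
    simp [stdProj, Matrix.single, Matrix.of_apply]
    rintro rfl rfl; exact h rfl

lemma exists_one (hQ : IsQIVPM L R) (hZ : IsZeroDet L R) :
    ∃ k : Fin d, L (stdProj k) = 1 := by
  by_contra h
  push_neg at h
  have hall : ∀ k : Fin d, L (stdProj k) = 0 := by
    intro k
    rcases hZ _ (stdProj_isProjector k) with ⟨h1, _⟩ | ⟨h1, _⟩
    · exact h1
    · exact absurd h1 (h k)
  have := (sum_stdProj L R hQ hZ Finset.univ).2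
  rw [sum_stdProj_univ] at this
  rw [hQ.2.2.1.1] at this
  simp [hall] at this



end Mat

section Pm
variable {d : ℕ} (k p q : Fin d) (hkp : k ≠ p) (hkq : k ≠ q) (hpq : p ≠ q)

def ur (a : V3) : Fin d → ℝ := fun i =>
  if i = k then a.1 else if i = p then a.2.1 else if i = q then a.2.2 else 0

def uc (a : V3) : Fin d → ℂ := fun i => (ur k p q a i : ℝ)

include hkp hkq hpq in
lemma sum_ur (a b : V3) : ∑ i, ur k p q a i * ur k p q b i = dot3 a b := by
  have hpt : ∀ i, ur k p q a i * ur k p q b i =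
      (if i = k then a.1 * b.1 else 0) + (if i = p then a.2.1 * b.2.1 else 0) +
        (if i = q then a.2.2 * b.2.2 else 0) := by
    intro i
    simp only [ur]
    split_ifs with h1 h2 h3 <;> subst_vars <;> simp_all <;> ring
  rw [Finset.sum_congr rfl fun i _ => hpt i]
  rw [Finset.sum_add_distrib, Finset.sum_add_distrib]
  simp [Finset.sum_ite_eq', dot3]

include hkp hkq hpq in
lemma sum_uc (a b : V3) : ∑ i, uc k p q a i * uc k p q b i = ((dot3 a b : ℝ) : ℂ) := by
  rw [← sum_ur k p q hkp hkq hpq a b]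
  push_cast
  rfl

noncomputable def Pmat (a : V3) : Matrix (Fin d) (Fin d) ℂ :=
  ((dot3 a a : ℝ) : ℂ)⁻¹ • vecMulVec (uc k p q a) (uc k p q a)

include hkp hkq hpq in
lemma mulM (a a' b b' : V3) :
    vecMulVec (uc k p q a) (uc k p q a') * vecMulVec (uc k p q b) (uc k p q b') =
      ((dot3 a' b : ℝ) : ℂ) • vecMulVec (uc k p q a) (uc k p q b') := by
  ext i j
  rw [Matrix.mul_apply]
  simp only [vecMulVec_apply, Matrix.smul_apply, smul_eq_mul]
  rw [← sum_uc k p q hkp hkq hpq a' b, Finset.sum_mul]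
  exact Finset.sum_congr rfl fun m _ => by ring

lemma Pmat_herm (a : V3) : (Pmat k p q a)ᴴ = Pmat k p q a := by
  rw [Pmat, conjTranspose_smul]
  congr 1
  · rw [star_inv₀]
    norm_num [Complex.star_def, Complex.conj_ofReal]
  · ext i j
    simp only [conjTranspose_apply, vecMulVec_apply, uc, ← Complex.ofReal_mul]
    simp [Complex.star_def, Complex.conj_ofReal, mul_comm]

include hkp hkq hpq in
lemma Pmat_mul (a b : V3) :
    Pmat k p q a * Pmat k p q b = (((dot3 a a)⁻¹ * (dot3 b b)⁻¹ * dot3 a b : ℝ) : ℂ) •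
      vecMulVec (uc k p q a) (uc k p q b) := by
  rw [Pmat, Pmat, Matrix.smul_mul, Matrix.mul_smul, mulM k p q hkp hkq hpq]
  rw [smul_smul, smul_smul]
  push_cast
  ring_nf

include hkp hkq hpq in
lemma Pmat_isProjector {a : V3} (ha : a ≠ 0) : IsProjector (Pmat k p q a) := by
  have hda : dot3 a a ≠ 0 := fun h => ha (dot3_self_eq_zero h)
  constructor
  · rw [Pmat_mul k p q hkp hkq hpq, Pmat]
    congr 1
    push_cast
    field_simp
  · exact Pmat_herm k p q a

include hkp hkq hpq in
lemma Pmat_orth {a b : V3} (hab : dot3 a b = 0) :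
    Pmat k p q a * Pmat k p q b = 0 := by
  rw [Pmat_mul k p q hkp hkq hpq, hab]
  simp

lemma Pmat_e1 : Pmat k p q (1,0,0) = Matrix.single k k (1:ℂ) := by
  ext i j
  have hd : dot3 ((1:ℝ),(0:ℝ),(0:ℝ)) (1,0,0) = 1 := by norm_num [dot3]
  rw [Pmat, hd]
  simp only [Matrix.smul_apply, vecMulVec_apply, uc, ur]
  norm_num
  by_cases h1 : i = k <;> by_cases h2 : j = k <;>
    simp [Matrix.single, Matrix.of_apply, h1, h2] <;> grind


include hkp hkq hpq in
lemma key_real {a b c : V3} (ha : dot3 a a ≠ 0) (hb : dot3 b b ≠ 0) (hc : dot3 c c ≠ 0)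
    (hab : dot3 a b = 0) (hac : dot3 a c = 0) (hbc : dot3 b c = 0) (i j : Fin d) :
    (dot3 a a)⁻¹ * (ur k p q a i * ur k p q a j) +
      (dot3 b b)⁻¹ * (ur k p q b i * ur k p q b j) +
      (dot3 c c)⁻¹ * (ur k p q c i * ur k p q c j) =
    ur k p q (1,0,0) i * ur k p q (1,0,0) j +
      ur k p q (0,1,0) i * ur k p q (0,1,0) j +
      ur k p q (0,0,1) i * ur k p q (0,0,1) j := by
  -- 3×3 orthogonal-rows ⇒ orthogonal-columns argument
  set N : Matrix (Fin 3) (Fin 3) ℝ :=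
    Matrix.of (fun x y => ![![a.1, a.2.1, a.2.2], ![b.1, b.2.1, b.2.2],
      ![c.1, c.2.1, c.2.2]] x y) with hNdef
  set dv : Fin 3 → ℝ := ![dot3 a a, dot3 b b, dot3 c c] with hdv
  have hab' : a.1*b.1 + a.2.1*b.2.1 + a.2.2*b.2.2 = 0 := hab
  have hac' : a.1*c.1 + a.2.1*c.2.1 + a.2.2*c.2.2 = 0 := hac
  have hbc' : b.1*c.1 + b.2.1*c.2.1 + b.2.2*c.2.2 = 0 := hbc
  have hN : N * Nᵀ = diagonal dv := by
    ext x y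
    fin_cases x <;> fin_cases y <;>
      simp [hNdef, hdv, Matrix.mul_apply, Fin.sum_univ_three, Matrix.transpose_apply, Matrix.diagonal, dot3] <;>
      linarith [hab', hac', hbc']
  have hv : ∀ v : Fin 3, dv v ≠ 0 := by
    intro v; fin_cases v <;> simpa [hdv] using ‹_›
  have hDD' : diagonal dv * diagonal (fun v => (dv v)⁻¹) = 1 := by
    rw [Matrix.diagonal_mul_diagonal]
    have : (fun v => dv v * (dv v)⁻¹) = fun _ => (1:ℝ) :=
      funext fun v => mul_inv_cancel₀ (hv v)
    rw [this, Matrix.diagonal_one]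
  have h1 : N * (Nᵀ * diagonal (fun v => (dv v)⁻¹)) = 1 := by
    rw [← Matrix.mul_assoc, hN, hDD']
  have h2 : (Nᵀ * diagonal (fun v => (dv v)⁻¹)) * N = 1 := mul_eq_one_comm.mp h1
  have E : ∀ x y : Fin 3,
      (dv 0)⁻¹ * (N 0 x * N 0 y) + (dv 1)⁻¹ * (N 1 x * N 1 y) +
        (dv 2)⁻¹ * (N 2 x * N 2 y) = if x = y then 1 else 0 := by
    intro x y
    have h3 := congrFun (congrFun h2 x) y
    rw [Matrix.mul_apply] at h3
    simp only [Matrix.mul_diagonal, Matrix.transpose_apply, Fin.sum_univ_three,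
      Matrix.one_apply] at h3
    rw [← h3]
    ring
  have E' : ∀ x y : Fin 3, (dot3 a a)⁻¹ * (N 0 x * N 0 y) + (dot3 b b)⁻¹ * (N 1 x * N 1 y) +
      (dot3 c c)⁻¹ * (N 2 x * N 2 y) = if x = y then 1 else 0 := by
    intro x y
    have := E x y
    simpa [hdv] using this
  by_cases hik : i = k
  case pos =>
    by_cases hjk : j = k
    case pos => subst hik hjk; have e := E' 0 0; simp [hNdef] at e; simp [ur, hkp, hkq, hpq, Ne.symm hkp, Ne.symm hkq, Ne.symm hpq]; first | linear_combination e | linarith [e]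
    by_cases hjp : j = p
    case pos => subst hik hjp; have e := E' 0 1; simp [hNdef] at e; simp [ur, hkp, hkq, hpq, Ne.symm hkp, Ne.symm hkq, Ne.symm hpq]; first | linear_combination e | linarith [e]
    by_cases hjq : j = q
    case pos => subst hik hjq; have e := E' 0 2; simp [hNdef] at e; simp [ur, hkp, hkq, hpq, Ne.symm hkp, Ne.symm hkq, Ne.symm hpq]; first | linear_combination e | linarith [e]
    subst hik; simp [ur, hjk, hjp, hjq, Ne.symm hkp, Ne.symm hkq, Ne.symm hpq, hkp, hkq, hpq]
  case neg =>
    by_cases hip : i = p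
    case pos =>
      by_cases hjk : j = k
      case pos => subst hip hjk; have e := E' 1 0; simp [hNdef] at e; simp [ur, hkp, hkq, hpq, Ne.symm hkp, Ne.symm hkq, Ne.symm hpq]; first | linear_combination e | linarith [e]
      by_cases hjp : j = p
      case pos => subst hip hjp; have e := E' 1 1; simp [hNdef] at e; simp [ur, hkp, hkq, hpq, Ne.symm hkp, Ne.symm hkq, Ne.symm hpq]; first | linear_combination e | linarith [e]
      by_cases hjq : j = q
      case pos => subst hip hjq; have e := E' 1 2; simp [hNdef] at e; simp [ur, hkp, hkq, hpq, Ne.symm hkp, Ne.symm hkq, Ne.symm hpq]; first | linear_combination e | linarith [e]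
      subst hip; simp [ur, hjk, hjp, hjq, Ne.symm hkp, Ne.symm hkq, Ne.symm hpq, hkp, hkq, hpq]
    case neg =>
      by_cases hiq : i = q
      case pos =>
        by_cases hjk : j = k
        case pos => subst hiq hjk; have e := E' 2 0; simp [hNdef] at e; simp [ur, hkp, hkq, hpq, Ne.symm hkp, Ne.symm hkq, Ne.symm hpq]; first | linear_combination e | linarith [e]
        by_cases hjp : j = p
        case pos => subst hiq hjp; have e := E' 2 1; simp [hNdef] at e; simp [ur, hkp, hkq, hpq, Ne.symm hkp, Ne.symm hkq, Ne.symm hpq]; first | linear_combination e | linarith [e]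
        by_cases hjq : j = q
        case pos => subst hiq hjq; have e := E' 2 2; simp [hNdef] at e; simp [ur, hkp, hkq, hpq, Ne.symm hkp, Ne.symm hkq, Ne.symm hpq]; first | linear_combination e | linarith [e]
        subst hiq; simp [ur, hjk, hjp, hjq, Ne.symm hkp, Ne.symm hkq, Ne.symm hpq, hkp, hkq, hpq]
      case neg =>
        simp [ur, hik, hip, hiq]

include hkp hkq hpq in
lemma Pmat_span {a b c : V3} (ha : a ≠ 0) (hb : b ≠ 0) (hc : c ≠ 0)
    (hab : dot3 a b = 0) (hac : dot3 a c = 0) (hbc : dot3 b c = 0) :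
    Pmat k p q a + Pmat k p q b + Pmat k p q c =
      Pmat k p q (1,0,0) + Pmat k p q (0,1,0) + Pmat k p q (0,0,1) := by
  have hda : dot3 a a ≠ 0 := fun h => ha (dot3_self_eq_zero h)
  have hdb : dot3 b b ≠ 0 := fun h => hb (dot3_self_eq_zero h)
  have hdc : dot3 c c ≠ 0 := fun h => hc (dot3_self_eq_zero h)
  ext i j
  have hk := key_real k p q hkp hkq hpq hda hdb hdc hab hac hbc i j
  have keyC := congrArg (fun r : ℝ => (r : ℂ)) hk
  push_cast at keyC
  simp only [Matrix.add_apply, Pmat, Matrix.smul_apply, vecMulVec_apply, smul_eq_mul, uc]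
  have d1 : dot3 ((1:ℝ),(0:ℝ),(0:ℝ)) ((1:ℝ),(0:ℝ),(0:ℝ)) = 1 := by norm_num [dot3]
  have d2 : dot3 ((0:ℝ),(1:ℝ),(0:ℝ)) ((0:ℝ),(1:ℝ),(0:ℝ)) = 1 := by norm_num [dot3]
  have d3 : dot3 ((0:ℝ),(0:ℝ),(1:ℝ)) ((0:ℝ),(0:ℝ),(1:ℝ)) = 1 := by norm_num [dot3]
  rw [d1, d2, d3]
  push_cast
  linear_combination keyC




end Pm

section Main

theorem main_contradiction {d : ℕ} (hd : 3 ≤ d)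
    (L R : Matrix (Fin d) (Fin d) ℂ → ℝ) (hQ : IsQIVPM L R) (hZ : IsZeroDet L R) :
    False := by
  obtain ⟨k, hk1⟩ := exists_one L R hQ hZ
  simp only [stdProj] at hk1
  obtain ⟨p, q, hkp, hkq, hpq⟩ : ∃ p q : Fin d, k ≠ p ∧ k ≠ q ∧ p ≠ q := by
    have h0 : 0 < d := by omega
    have h1 : 1 < d := by omega
    have h2 : 2 < d := by omega
    have n01 : (⟨0, h0⟩ : Fin d) ≠ ⟨1, h1⟩ := by simp [Fin.ext_iff]
    have n02 : (⟨0, h0⟩ : Fin d) ≠ ⟨2, h2⟩ := by simp [Fin.ext_iff]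
    have n12 : (⟨1, h1⟩ : Fin d) ≠ ⟨2, h2⟩ := by simp [Fin.ext_iff]
    by_cases hk0 : k = ⟨0, h0⟩
    · exact ⟨⟨1, h1⟩, ⟨2, h2⟩, hk0 ▸ n01, hk0 ▸ n02, n12⟩
    · by_cases hk1' : k = ⟨1, h1⟩
      · exact ⟨⟨0, h0⟩, ⟨2, h2⟩, hk0, hk1' ▸ n12, n02⟩
      · exact ⟨⟨0, h0⟩, ⟨1, h1⟩, hk0, hk1', n01⟩
  set g : V3 → ℝ := fun x => L (Pmat k p q x) with hg
  have h01 : ∀ a : V3, a ≠ 0 → g a = 0 ∨ g a = 1 := by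
    intro a ha
    rcases hZ _ (Pmat_isProjector k p q hkp hkq hpq ha) with ⟨h, _⟩ | ⟨h, _⟩
    · exact Or.inl h
    · exact Or.inr h
  have hone : g (1,0,0) = 1 := by
    show L (Pmat k p q (1,0,0)) = 1
    rw [Pmat_e1 k p q]
    exact hk1
  have hEsum : L (Pmat k p q (1,0,0) + Pmat k p q (0,1,0) + Pmat k p q (0,0,1)) = 1 ∧
      IsProjector (Pmat k p q (1,0,0) + Pmat k p q (0,1,0) + Pmat k p q (0,0,1)) := by
    have ne1 : ((1,0,0) : V3) ≠ 0 := mk_ne_zero (by norm_num)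
    have ne2 : ((0,1,0) : V3) ≠ 0 := mk_ne_zero (by norm_num)
    have ne3 : ((0,0,1) : V3) ≠ 0 := mk_ne_zero (by norm_num)
    have pj1 := Pmat_isProjector k p q hkp hkq hpq ne1
    have pj2 := Pmat_isProjector k p q hkp hkq hpq ne2
    have pj3 := Pmat_isProjector k p q hkp hkq hpq ne3
    have o12 := Pmat_orth k p q hkp hkq hpq (a := (1,0,0)) (b := (0,1,0)) (by norm_num [dot3])
    have o13 := Pmat_orth k p q hkp hkq hpq (a := (1,0,0)) (b := (0,0,1)) (by norm_num [dot3])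
    have o23 := Pmat_orth k p q hkp hkq hpq (a := (0,1,0)) (b := (0,0,1)) (by norm_num [dot3])
    have A1 := addL L R hQ hZ pj1 pj2 o12
    have oc : (Pmat k p q (1,0,0) + Pmat k p q (0,1,0)) * Pmat k p q (0,0,1) = 0 := by
      rw [add_mul, o13, o23, add_zero]
    have A2 := addL L R hQ hZ A1.1 pj3 oc
    have hLE1 : L (Pmat k p q (1,0,0)) = 1 := by rw [Pmat_e1 k p q]; exact hk1
    have hLE2 : 0 ≤ L (Pmat k p q (0,1,0)) := (hQ.1 _ pj2).1
    have hLE3 : 0 ≤ L (Pmat k p q (0,0,1)) := (hQ.1 _ pj3).1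
    have hub : L (Pmat k p q (1,0,0) + Pmat k p q (0,1,0) + Pmat k p q (0,0,1)) ≤ 1 := by
      have hb := hQ.1 _ A2.1
      linarith [hb.2.1, hb.2.2]
    refine ⟨?_, A2.1⟩
    have := A2.2
    rw [A1.2, hLE1] at this
    linarith
  have hsum : ∀ a b c : V3, a ≠ 0 → b ≠ 0 → c ≠ 0 →
      dot3 a b = 0 → dot3 a c = 0 → dot3 b c = 0 → g a + g b + g c = 1 := by
    intro a b c ha hb hc hab hac hbc
    have pja := Pmat_isProjector k p q hkp hkq hpq ha
    have pjb := Pmat_isProjector k p q hkp hkq hpq hb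
    have pjc := Pmat_isProjector k p q hkp hkq hpq hc
    have oab := Pmat_orth k p q hkp hkq hpq hab
    have oac := Pmat_orth k p q hkp hkq hpq hac
    have obc := Pmat_orth k p q hkp hkq hpq hbc
    have A1 := addL L R hQ hZ pja pjb oab
    have oc : (Pmat k p q a + Pmat k p q b) * Pmat k p q c = 0 := by
      rw [add_mul, oac, obc, add_zero]
    have A2 := addL L R hQ hZ A1.1 pjc oc
    have hspan := Pmat_span k p q hkp hkq hpq ha hb hc hab hac hbc
    show L (Pmat k p q a) + L (Pmat k p q b) + L (Pmat k p q c) = 1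
    rw [← A1.2, ← A2.2, hspan, hEsum.1]
  exact no_coloring g h01 hsum hone

end Main

end KSAux

/-- 0-deterministic variant of the Kochen–Specker theorem: for `d ≥ 3` there is
no 0-deterministic QIVPM on `ℂ^d`. -/
theorem kochenSpecker_zeroDeterministic : ∀ d : ℕ, 3 ≤ d →
    ¬ ∃ L R : Matrix (Fin d) (Fin d) ℂ → ℝ, IsQIVPM L R ∧ IsZeroDet L R := by
  rintro d hd ⟨L, R, hQ, hZ⟩
  exact KSAux.main_contradiction hd L R hQ hZ
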